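/- Let n' and d' be coprime positive integers and let m be an integer with m ≥ n'd' - n' - d'. Then the sum of all (n',d')-representable integers in [0,m] equals m(m+1)/2 - (n'-1)(d'-1)(2n'd'-n'-d'-1)/12, and the number of such representable integers equals m + 1 - (n'-1)(d'-1)/2. -/

import Mathlib

set_option linter.unusedTactic false
set_option linter.unusedSectionVars false

lemma sumIdQ (n : ℕ) : ∑ b ∈ Finset.range n, (b:ℚ) = n*(n-1)/2 := by
  induction n with
  | zero => simp
  | succ k ih => rw [Finset.sum_range_succ, ih]; push_cast; ring

lemma sumSqQ (n : ℕ) : ∑ b ∈ Finset.range n, (b:ℚ)^2 = n*(n-1)*(2*n-1)/6 := by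
  induction n with
  | zero => simp
  | succ k ih => rw [Finset.sum_range_succ, ih]; push_cast; ring

lemma sumIccIdQ (f : ℕ) : ∑ a ∈ Finset.Icc 1 f, (a:ℚ) = f*(f+1)/2 := by
  induction f with
  | zero => simp
  | succ k ih => rw [Finset.sum_Icc_succ_top (by omega), ih]; push_cast; ring


lemma IccInt_eq_image (k : ℕ) :
    Finset.Icc (0:ℤ) ((k:ℤ)-1) = (Finset.range k).image (Nat.cast : ℕ → ℤ) := by
  ext x
  simp only [Finset.mem_Icc, Finset.mem_image, Finset.mem_range]
  constructor
  · rintro ⟨h0, h1⟩; exact ⟨x.toNat, by omega, by omega⟩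
  · rintro ⟨a, ha, rfl⟩; omega

lemma sumIccInt (k : ℕ) :
    ((∑ x ∈ Finset.Icc (0:ℤ) ((k:ℤ)-1), x : ℤ) : ℚ) = ((k:ℚ)-1)*k/2 := by
  rw [IccInt_eq_image, Finset.sum_image (by intros a _ b _ h; exact_mod_cast h)]
  push_cast
  induction k with
  | zero => simp
  | succ k ih => rw [Finset.sum_range_succ, ih]; push_cast; ring

lemma nonrep_iff (n' d' : ℕ) (hn' : 0 < n') (hd' : 0 < d') (hcop : Nat.gcd n' d' = 1) (x : ℤ) (hx : 0 ≤ x) :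
    (¬ ∃ a b : ℕ, x = (n':ℤ)*a + (d':ℤ)*b) ↔
      ∃ b a : ℕ, b < n' ∧ 1 ≤ a ∧ x = (d':ℤ)*b - (n':ℤ)*a := by
  have hn0 : (0:ℤ) < n' := by exact_mod_cast hn'
  have hco : IsCoprime (n':ℤ) (d':ℤ) := by
    rw [Int.isCoprime_iff_gcd_eq_one]; exact_mod_cast hcop
  constructor
  · intro hnr
    obtain ⟨u, v, huv⟩ := hco
    set b0 : ℤ := (x * v) % n' with hb0def
    have hb0nn : 0 ≤ b0 := Int.emod_nonneg _ (by positivity)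
    have hb0lt : b0 < n' := Int.emod_lt_of_pos _ hn0
    have hdvd : (n':ℤ) ∣ x - d' * b0 := by
      have h1 : (n':ℤ) ∣ x * v - b0 := Int.dvd_self_sub_of_emod_eq rfl
      obtain ⟨t, ht⟩ := h1
      refine ⟨x * u + d' * t, ?_⟩
      have hb : b0 = x * v - n' * t := by linarith
      rw [hb]; nlinarith [huv]
    obtain ⟨t, ht⟩ := hdvd
    rcases le_or_gt 0 t with htn | htn
    · exact absurd ⟨t.toNat, b0.toNat, by
        push_cast [Int.toNat_of_nonneg htn, Int.toNat_of_nonneg hb0nn]; linarith⟩ hnr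
    · refine ⟨b0.toNat, (-t).toNat, by omega, by omega, ?_⟩
      push_cast [Int.toNat_of_nonneg hb0nn, Int.toNat_of_nonneg (by omega : (0:ℤ) ≤ -t)]
      linarith
  · rintro ⟨b, a, hb, ha, rfl⟩ ⟨a', b', h⟩
    have hdvd : (n':ℤ) ∣ ((b:ℤ) - b') := by
      have h2 : (n':ℤ) ∣ d' * ((b:ℤ) - b') := ⟨a + a', by push_cast; linarith⟩
      exact (IsCoprime.dvd_of_dvd_mul_left hco h2)
    have hbb : (b:ℤ) ≤ b' := by
      by_contra hlt
      push_neg at hlt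
      have := Int.le_of_dvd (by omega) hdvd
      omega
    have ha1 : (1:ℤ) ≤ a := by exact_mod_cast ha
    have ha'0 : (0:ℤ) ≤ a' := Int.natCast_nonneg a'
    have hd0 : (0:ℤ) ≤ d' := Int.natCast_nonneg d'
    nlinarith [mul_le_mul_of_nonneg_left hbb hd0]

lemma perm_sum (n' d' : ℕ) (hn' : 0 < n') (hcop : Nat.gcd n' d' = 1) (g : ℕ → ℚ) :
    ∑ b ∈ Finset.range n', g (d' * b % n') = ∑ r ∈ Finset.range n', g r := by
  have hinj : Set.InjOn (fun b => d' * b % n') (Finset.range n') := by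
    intro b1 h1 b2 h2 h
    simp only [Finset.coe_range, Set.mem_Iio] at h1 h2
    have : b1 ≡ b2 [MOD n'] :=
      Nat.ModEq.cancel_left_of_coprime hcop (h : d' * b1 ≡ d' * b2 [MOD n'])
    exact Nat.ModEq.eq_of_lt_of_lt this h1 h2
  have himg : (Finset.range n').image (fun b => d' * b % n') = Finset.range n' := by
    apply Finset.eq_of_subset_of_card_le
    · intro r hr
      simp only [Finset.mem_image, Finset.mem_range] at hr ⊢
      obtain ⟨b, _, rfl⟩ := hr
      exact Nat.mod_lt _ hn'
    · rw [Finset.card_image_of_injOn hinj]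
  conv_rhs => rw [← himg]
  rw [Finset.sum_image (fun a ha b hb h => hinj ha hb h)]

lemma filter_inner (n' d' : ℕ) (hn' : 0 < n') (hd' : 0 < d') (b : ℕ) (hb : b < n') :
    (Finset.Icc 1 d').filter (fun a => n' * a ≤ d' * b) = Finset.Icc 1 (d' * b / n') := by
  ext a
  simp only [Finset.mem_filter, Finset.mem_Icc]
  constructor
  · rintro ⟨⟨h1, _⟩, h2⟩
    exact ⟨h1, (Nat.le_div_iff_mul_le hn').mpr (by linarith [h2])⟩
  · rintro ⟨h1, h2⟩
    have h3 : a * n' ≤ d' * b := (Nat.le_div_iff_mul_le hn').mp h2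
    have h4 : a * n' < d' * n' := by
      calc a * n' ≤ d' * b := h3
        _ < d' * n' := (Nat.mul_lt_mul_left hd').mpr hb
    exact ⟨⟨h1, le_of_lt (Nat.lt_of_mul_lt_mul_right h4)⟩, by linarith [h3]⟩

lemma T_sum (n' d' : ℕ) (hn' : 0 < n') (hd' : 0 < d') (hcop : Nat.gcd n' d' = 1) :
    ∑ p ∈ ((Finset.range n') ×ˢ (Finset.Icc 1 d')).filter
        (fun p => n' * p.2 ≤ d' * p.1), ((d':ℚ) * p.1 - (n':ℚ) * p.2)
      = ((n':ℚ) - 1) * ((d':ℚ) - 1)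
          * (2 * (n':ℚ) * (d':ℚ) - (n':ℚ) - (d':ℚ) - 1) / 12 := by
  have hn0 : (n':ℚ) ≠ 0 := by positivity
  rw [Finset.sum_filter, Finset.sum_product]
  have step1 : ∀ b ∈ Finset.range n',
      (∑ a ∈ Finset.Icc 1 d', if n' * a ≤ d' * b then ((d':ℚ) * b - (n':ℚ) * a) else 0)
        = ((d':ℚ)^2*b^2 - ((d'*b % n' : ℕ):ℚ)^2 - n'*d'*b + n'*((d'*b % n' : ℕ):ℚ))/(2*n') := by
    intro b hb
    rw [← Finset.sum_filter, filter_inner n' d' hn' hd' b (Finset.mem_range.mp hb)]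
    set f : ℕ := d' * b / n' with hf
    set r : ℕ := d' * b % n' with hr
    have key : (n':ℚ) * f + r = (d':ℚ) * b := by
      rw [hf, hr]; exact_mod_cast Nat.div_add_mod (d' * b) n' 
    have hsum : ∑ a ∈ Finset.Icc 1 f, ((d':ℚ) * b - (n':ℚ) * a)
        = f * ((d':ℚ)*b) - (n':ℚ) * (f*(f+1)/2) := by
      rw [Finset.sum_sub_distrib, Finset.sum_const, ← Finset.mul_sum, sumIccIdQ,
        Nat.card_Icc]
      simp only [Nat.add_sub_cancel, nsmul_eq_mul]
    rw [hsum]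
    field_simp
    linear_combination (-((n':ℚ)*f - (r:ℚ) - (d':ℚ)*b + (n':ℚ))) * key
  rw [Finset.sum_congr rfl step1]
  have expand : ∑ b ∈ Finset.range n',
      ((d':ℚ)^2*b^2 - ((d'*b % n' : ℕ):ℚ)^2 - n'*d'*b + n'*((d'*b % n' : ℕ):ℚ))/(2*n')
      = ((d':ℚ)^2 * (∑ b ∈ Finset.range n', (b:ℚ)^2)
          - (∑ b ∈ Finset.range n', ((d'*b % n' : ℕ):ℚ)^2)
          - (n':ℚ)*d' * (∑ b ∈ Finset.range n', (b:ℚ))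
          + (n':ℚ) * (∑ b ∈ Finset.range n', ((d'*b % n' : ℕ):ℚ)))/(2*n') := by
    rw [← Finset.sum_div]
    congr 1
    rw [Finset.mul_sum, Finset.mul_sum, Finset.mul_sum]
    rw [← Finset.sum_sub_distrib, ← Finset.sum_sub_distrib, ← Finset.sum_add_distrib]
  rw [expand, perm_sum n' d' hn' hcop (fun r => (r:ℚ)^2),
    perm_sum n' d' hn' hcop (fun r => (r:ℚ)), sumIdQ, sumSqQ]
  field_simp
  ring

lemma T_card (n' d' : ℕ) (hn' : 0 < n') (hd' : 0 < d') (hcop : Nat.gcd n' d' = 1) :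
    ((((Finset.range n') ×ˢ (Finset.Icc 1 d')).filter
        (fun p => n' * p.2 ≤ d' * p.1)).card : ℚ)
      = ((n':ℚ) - 1) * ((d':ℚ) - 1) / 2 := by
  have hn0 : (n':ℚ) ≠ 0 := by positivity
  rw [Finset.card_filter]
  push_cast [apply_ite (Nat.cast : ℕ → ℚ)]
  rw [Finset.sum_product]
  have step1 : ∀ b ∈ Finset.range n',
      (∑ a ∈ Finset.Icc 1 d', if n' * a ≤ d' * b then (1:ℚ) else 0)
        = ((d':ℚ)*b - ((d'*b % n' : ℕ):ℚ))/n' := by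
    intro b hb
    rw [← Finset.sum_filter, filter_inner n' d' hn' hd' b (Finset.mem_range.mp hb)]
    rw [Finset.sum_const, Nat.card_Icc]
    simp only [Nat.add_sub_cancel, nsmul_eq_mul, mul_one]
    have key : (n':ℚ) * (d'*b/n' : ℕ) + ((d'*b % n' : ℕ):ℚ) = (d':ℚ) * b := by
      exact_mod_cast Nat.div_add_mod (d' * b) n' 
    field_simp
    linarith [key]
  rw [Finset.sum_congr rfl step1, ← Finset.sum_div, Finset.sum_sub_distrib,
    ← Finset.mul_sum, perm_sum n' d' hn' hcop (fun r => (r:ℚ)), sumIdQ]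
  field_simp

open scoped Classical in
theorem representable_sum_and_card (n' d' : ℕ) (hn' : 0 < n') (hd' : 0 < d')
    (hcop : Nat.gcd n' d' = 1) (m : ℤ) (hm : (n' : ℤ) * d' - n' - d' ≤ m) :
    ((∑ x ∈ (Finset.Icc (0 : ℤ) m).filter
        (fun x => ∃ a b : ℕ, x = (n' : ℤ) * a + (d' : ℤ) * b), x : ℤ) : ℚ)
        = (m : ℚ) * ((m : ℚ) + 1) / 2
          - ((n' : ℚ) - 1) * ((d' : ℚ) - 1)
              * (2 * (n' : ℚ) * (d' : ℚ) - (n' : ℚ) - (d' : ℚ) - 1) / 12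
    ∧ (((Finset.Icc (0 : ℤ) m).filter
        (fun x => ∃ a b : ℕ, x = (n' : ℤ) * a + (d' : ℤ) * b)).card : ℚ)
        = (m : ℚ) + 1 - ((n' : ℚ) - 1) * ((d' : ℚ) - 1) / 2 := by
  have hn0 : (0:ℤ) < n' := by exact_mod_cast hn'
  have hd0 : (0:ℤ) < d' := by exact_mod_cast hd'
  have hm1 : -1 ≤ m := by nlinarith
  set T : Finset (ℕ × ℕ) := ((Finset.range n') ×ˢ (Finset.Icc 1 d')).filter
      (fun p => n' * p.2 ≤ d' * p.1) with hT
  set e : ℕ × ℕ → ℤ := fun p => (d':ℤ) * p.1 - (n':ℤ) * p.2 with he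
  have hco : IsCoprime (n':ℤ) (d':ℤ) := by
    rw [Int.isCoprime_iff_gcd_eq_one]; exact_mod_cast hcop
  have hinj : Set.InjOn e T := by
    intro p hp q hq hpq
    simp only [hT, Finset.coe_filter, Finset.mem_product, Finset.mem_range,
      Finset.mem_Icc, Set.mem_setOf_eq] at hp hq
    obtain ⟨⟨hp1, _, _⟩, _⟩ := hp
    obtain ⟨⟨hq1, _, _⟩, _⟩ := hq
    simp only [he] at hpq
    have hdvd : (n':ℤ) ∣ ((p.1:ℤ) - q.1) :=
      IsCoprime.dvd_of_dvd_mul_left hco ⟨(p.2:ℤ) - q.2, by push_cast; linarith⟩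
    have h1 : p.1 = q.1 := by
      rcases hdvd with ⟨c, hc⟩
      have hp1' : (p.1:ℤ) < n' := by exact_mod_cast hp1
      have hq1' : (q.1:ℤ) < n' := by exact_mod_cast hq1
      have hc0 : c = 0 := by nlinarith [Int.natCast_nonneg p.1, Int.natCast_nonneg q.1]
      rw [hc0, mul_zero] at hc
      exact_mod_cast (by linarith : (p.1:ℤ) = (q.1:ℤ))
    have h2 : p.2 = q.2 := by
      have : (n':ℤ) * p.2 = (n':ℤ) * q.2 := by
        rw [h1] at hpq; linarith
      have := mul_left_cancel₀ (ne_of_gt hn0) this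
      exact_mod_cast this
    exact Prod.ext h1 h2
  have hNset : (Finset.Icc (0 : ℤ) m).filter
      (fun x => ¬ ∃ a b : ℕ, x = (n' : ℤ) * a + (d' : ℤ) * b) = T.image e := by
    ext x
    simp only [Finset.mem_filter, Finset.mem_Icc, Finset.mem_image, hT,
      Finset.mem_filter, Finset.mem_product, Finset.mem_range, Finset.mem_Icc]
    constructor
    · rintro ⟨⟨hx0, hxm⟩, hnr⟩
      obtain ⟨b, a, hb, ha, hxe⟩ := (nonrep_iff n' d' hn' hd' hcop x hx0).mp hnr
      have hba : n' * a ≤ d' * b := by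
        have : (n':ℤ) * a ≤ (d':ℤ) * b := by linarith [hxe ▸ hx0]
        exact_mod_cast this
      have had : a ≤ d' := by
        have h4 : a * n' < d' * n' :=
          calc a * n' ≤ d' * b := by linarith [hba]
            _ < d' * n' := (Nat.mul_lt_mul_left hd').mpr hb
        exact le_of_lt (Nat.lt_of_mul_lt_mul_right h4)
      exact ⟨(b, a), ⟨⟨hb, ha, had⟩, hba⟩, hxe.symm⟩
    · rintro ⟨⟨b, a⟩, ⟨⟨hb, ha, had⟩, hba⟩, rfl⟩
      simp only [he]
      have hba' : (n':ℤ) * a ≤ (d':ℤ) * b := by exact_mod_cast hba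
      have hb' : (b:ℤ) ≤ (n':ℤ) - 1 := by
        have : (b:ℤ) < n' := by exact_mod_cast hb
        omega
      have ha' : (1:ℤ) ≤ a := by exact_mod_cast ha
      refine ⟨⟨by linarith, ?_⟩, ?_⟩
      · nlinarith
      · exact (nonrep_iff n' d' hn' hd' hcop _ (by nlinarith)).mpr ⟨b, a, hb, ha, rfl⟩
  -- sum and card of Icc
  obtain ⟨k, hk⟩ : ∃ k : ℕ, m = (k:ℤ) - 1 := ⟨(m+1).toNat, by omega⟩
  have hIccSum : ((∑ x ∈ Finset.Icc (0:ℤ) m, x : ℤ) : ℚ) = (m:ℚ)*((m:ℚ)+1)/2 := by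
    subst hk
    rw [sumIccInt]
    push_cast
    ring
  have hIccCard : ((Finset.Icc (0:ℤ) m).card : ℚ) = (m:ℚ) + 1 := by
    rw [Int.card_Icc]
    have : (m + 1 - 0).toNat = (m+1).toNat := by omega
    rw [this]
    have h5 : ((m+1).toNat : ℤ) = m + 1 := by omega
    exact_mod_cast congrArg (fun t : ℤ => (t:ℚ)) h5
  -- split
  have hsplit := Finset.sum_filter_add_sum_filter_not (Finset.Icc (0:ℤ) m)
    (fun x => ∃ a b : ℕ, x = (n' : ℤ) * a + (d' : ℤ) * b) (fun x => x)
  have hcsplit := Finset.card_filter_add_card_filter_not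
    (s := Finset.Icc (0:ℤ) m)
    (p := fun x => ∃ a b : ℕ, x = (n' : ℤ) * a + (d' : ℤ) * b)
  rw [hNset] at hsplit hcsplit
  have hNsum : ((∑ x ∈ T.image e, x : ℤ) : ℚ)
      = ((n':ℚ) - 1) * ((d':ℚ) - 1)
          * (2 * (n':ℚ) * (d':ℚ) - (n':ℚ) - (d':ℚ) - 1) / 12 := by
    rw [Finset.sum_image (fun a ha b hb h => hinj ha hb h)]
    rw [← T_sum n' d' hn' hd' hcop]
    push_cast [he]
    rfl
  have hNcard : (((T.image e).card : ℕ) : ℚ) = ((n':ℚ) - 1) * ((d':ℚ) - 1) / 2 := by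
    rw [Finset.card_image_of_injOn hinj]
    exact T_card n' d' hn' hd' hcop
  constructor
  · have : ((∑ x ∈ (Finset.Icc (0 : ℤ) m).filter
        (fun x => ∃ a b : ℕ, x = (n' : ℤ) * a + (d' : ℤ) * b), x : ℤ) : ℚ)
        = ((∑ x ∈ Finset.Icc (0:ℤ) m, x : ℤ) : ℚ) - ((∑ x ∈ T.image e, x : ℤ) : ℚ) := by
      have := congrArg (fun t : ℤ => (t:ℚ)) hsplit
      push_cast at this ⊢
      linarith
    rw [this, hIccSum, hNsum]
  · have : (((Finset.Icc (0 : ℤ) m).filter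
        (fun x => ∃ a b : ℕ, x = (n' : ℤ) * a + (d' : ℤ) * b)).card : ℚ)
        = ((Finset.Icc (0:ℤ) m).card : ℚ) - ((T.image e).card : ℚ) := by
      have := congrArg (fun t : ℕ => (t:ℚ)) hcsplit
      push_cast at this ⊢
      linarith
    rw [this, hIccCard, hNcard]
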